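/- Non-vanishing of the power-weighted integral near any exponent (proof of Lemma A.6): Let h : ℝ → ℝ be a Schwartz function with ∫₀^∞ h(−y) dy ≠ 0. Then for every γ ∈ (−1,0) and every ε > 0 there exists η ∈ (−1,0) with |η − γ| < ε such that ∫₀^∞ h(−y)·y^η dy ≠ 0. -/

import Mathlib

open Real MeasureTheory

section Aux

open Complex Filter Asymptotics Set

lemma schwartz_mellin_real_eq (h : SchwartzMap ℝ ℝ) (η : ℝ) :
    mellin (fun t => ((h (-t) : ℝ) : ℂ)) (↑η + 1)
      = ↑(∫ y in Set.Ioi (0 : ℝ), h (-y) * y ^ η) := by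
  have h1 : ∫ t in Set.Ioi (0:ℝ), ((h (-t) * t ^ η : ℝ) : ℂ)
      = ((∫ y in Set.Ioi (0 : ℝ), h (-y) * y ^ η : ℝ) : ℂ) := integral_ofReal
  rw [mellin, show (↑η + 1 - 1 : ℂ) = ↑η by ring, ← h1]
  refine setIntegral_congr_fun measurableSet_Ioi (fun t ht => ?_)
  rw [smul_eq_mul, ← Complex.ofReal_cpow (le_of_lt ht), ← Complex.ofReal_mul]
  norm_num [mul_comm]

lemma schwartz_mellin_analytic (h : SchwartzMap ℝ ℝ) :
    AnalyticOnNhd ℂ (mellin (fun t => ((h (-t) : ℝ) : ℂ))) {s : ℂ | 0 < s.re} := by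
  have hopen : IsOpen {s : ℂ | 0 < s.re} := isOpen_lt continuous_const Complex.continuous_re
  refine DifferentiableOn.analyticOnNhd (fun s hs => ?_) hopen
  refine (mellin_differentiableAt_of_isBigO_rpow (a := s.re + 1) (b := 0)
    ?_ ?_ (by simp) ?_ hs).differentiableWithinAt
  · exact (Complex.continuous_ofReal.comp
      (h.continuous.comp continuous_neg)).locallyIntegrable.locallyIntegrableOn _
  · -- decay at infinity
    rw [Complex.isBigO_ofReal_left]
    have hc : Tendsto (fun t : ℝ => -t) atTop (cocompact ℝ) := by
      rw [cocompact_eq_atBot_atTop]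
      exact tendsto_neg_atTop_atBot.mono_right le_sup_left
    have := (h.isBigO_cocompact_rpow (-(s.re + 1))).comp_tendsto hc
    refine this.trans (IsBigO.of_bound 1 ?_)
    filter_upwards [eventually_ge_atTop (0:ℝ)] with t ht
    simp [Function.comp, _root_.abs_of_nonneg ht,
      _root_.abs_of_nonneg (Real.rpow_nonneg ht _)]
  · -- bounded near 0
    have : Tendsto (fun t : ℝ => ((h (-t) : ℝ) : ℂ)) (nhdsWithin 0 (Ioi 0))
        (nhds ((h 0 : ℝ) : ℂ)) := by
      have := (Complex.continuous_ofReal.comp (h.continuous.comp continuous_neg)).tendsto 0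
      simpa [Function.comp_def] using this.mono_left nhdsWithin_le_nhds
    refine (this.isBigO_one ℂ).trans (IsBigO.of_bound 1 ?_)
    filter_upwards [self_mem_nhdsWithin] with t (ht : 0 < t)
    simp

end Aux

/-- **Non-vanishing of the power-weighted integral near any exponent**
(proof of Lemma A.6).  Let `h` be a Schwartz function on `ℝ` with
`∫₀^∞ h(-y) dy ≠ 0`.  Then for every `γ ∈ (-1,0)` and every `ε > 0` there exists
`η ∈ (-1,0)` with `|η - γ| < ε` such that `∫₀^∞ h(-y) y^η dy ≠ 0`. -/
theorem schwartz_power_weight_integral_nonvanishing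
    (h : SchwartzMap ℝ ℝ)
    (h0 : (∫ y in Set.Ioi (0 : ℝ), h (-y)) ≠ 0)
    (γ : ℝ) (hγ : γ ∈ Set.Ioo (-1 : ℝ) 0) (ε : ℝ) (hε : 0 < ε) :
    ∃ η : ℝ, -1 < η ∧ η < 0 ∧ |η - γ| < ε ∧
      (∫ y in Set.Ioi (0 : ℝ), h (-y) * y ^ η) ≠ 0 := by
  by_contra hcon
  push_neg at hcon
  set F := mellin (fun t => ((h (-t) : ℝ) : ℂ)) with hF
  have hA := schwartz_mellin_analytic h
  have hU : IsPreconnected {s : ℂ | 0 < s.re} :=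
    (convex_halfSpace_re_gt 0).isPreconnected
  obtain ⟨hγ1, hγ2⟩ := hγ
  set z₀ : ℂ := (γ : ℂ) + 1 with hz₀def
  have hz₀ : z₀ ∈ {s : ℂ | 0 < s.re} := by
    simp only [Set.mem_setOf_eq, hz₀def, Complex.add_re, Complex.ofReal_re, Complex.one_re]
    linarith
  have hmap : Filter.Tendsto (fun t : ℝ => ((γ + t : ℝ) : ℂ) + 1)
      (nhdsWithin 0 (Set.Ioi 0)) (nhdsWithin z₀ {z₀}ᶜ) := by
    rw [tendsto_nhdsWithin_iff]
    constructor
    · have hc : Continuous (fun t : ℝ => ((γ + t : ℝ) : ℂ) + 1) := by continuity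
      have := (hc.tendsto 0).mono_left (nhdsWithin_le_nhds (s := Set.Ioi 0))
      simpa [hz₀def] using this
    · filter_upwards [self_mem_nhdsWithin] with t (ht : 0 < t)
      simp only [Set.mem_compl_iff, Set.mem_singleton_iff, hz₀def]
      intro hEq
      have : ((γ + t : ℝ) : ℂ) = (γ : ℂ) := by linear_combination hEq
      rw [Complex.ofReal_inj] at this
      linarith
  have hev : ∀ᶠ t in nhdsWithin (0:ℝ) (Set.Ioi 0), F (((γ + t : ℝ) : ℂ) + 1) = 0 := by
    filter_upwards [Ioo_mem_nhdsGT_of_mem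
      (Set.mem_Ico.mpr ⟨le_refl (0:ℝ), lt_min hε (by linarith : (0:ℝ) < -γ)⟩)] with t ht
    obtain ⟨ht0, ht1⟩ := ht
    have h1 : -1 < γ + t := by linarith
    have h2 : γ + t < 0 := by
      have := lt_of_lt_of_le ht1 (min_le_right _ _); linarith
    have h3 : |γ + t - γ| < ε := by
      have := lt_of_lt_of_le ht1 (min_le_left _ _)
      rw [show γ + t - γ = t by ring, abs_of_pos ht0]; exact this
    rw [hF, schwartz_mellin_real_eq h (γ + t), hcon (γ + t) h1 h2 h3, Complex.ofReal_zero]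
  have hfreq : ∃ᶠ z in nhdsWithin z₀ {z₀}ᶜ, F z = 0 :=
    hmap.frequently hev.frequently
  have hzero : Set.EqOn F 0 {s : ℂ | 0 < s.re} :=
    hA.eqOn_zero_of_preconnected_of_frequently_eq_zero hU hz₀ hfreq
  have h1mem : (1 : ℂ) ∈ {s : ℂ | 0 < s.re} := by simp
  have := hzero h1mem
  rw [show (1 : ℂ) = ((0 : ℝ) : ℂ) + 1 by simp, hF,
    schwartz_mellin_real_eq h 0] at this
  simp only [Real.rpow_zero, mul_one, Pi.zero_apply, Complex.ofReal_eq_zero] at this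
  exact h0 this
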